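/- Let X be a bounded geometry metric space, let R>0, let M bound the cardinality of all balls of radius R in X, and let Δ_R be the Laplacian at scale R. Then for every norm-one ξ ∈ ℓ²(X), Σ_{(x,y): d(x,y)≤R} | |ξ(x)|² − |ξ(y)|² | ≤ √(2⟨Δ_R ξ, ξ⟩) · √(4M). -/

import Mathlib

/-!
Formalization of statements from "Ghostbusting and property A" (Roe–Willett).
`L2 X` is ℓ²(X) with complex coefficients, `diracDelta x` the Dirac basis vector δ_x,
`matrixEntry T x y = ⟨δ_x, T δ_y⟩`.
-/

noncomputable section

open Metric Set

/-- ℓ²(X) with complex coefficients. -/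
abbrev L2 (X : Type*) := lp (fun _ : X => ℂ) 2

/-- The Dirac mass δ_x ∈ ℓ²(X). -/
def diracDelta {X : Type*} (x : X) : L2 X :=
  letI := Classical.decEq X
  lp.single 2 x 1

/-- The matrix entry T_{xy} = ⟨δ_x, T δ_y⟩ of a bounded operator on ℓ²(X). -/
def matrixEntry {X : Type*} (T : L2 X →L[ℂ] L2 X) (x y : X) : ℂ :=
  inner ℂ (diracDelta x) (T (diracDelta y))

/-- A metric space has bounded geometry if for each `R > 0` there is a uniform
bound on the cardinality of all balls of radius `R`. -/
def BoundedGeometry (X : Type*) [MetricSpace X] : Prop :=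
  ∀ R : ℝ, 0 < R → ∃ N : ℕ, ∀ x : X,
    (Metric.closedBall x R).Finite ∧ (Metric.closedBall x R).ncard ≤ N

/-- `T` has propagation at most `R`: the matrix entries vanish whenever `d(x,y) > R`.
(`T ∈ ℂ_R[X]` in the notation of the paper.) -/
def HasPropagationLE {X : Type*} [MetricSpace X] (T : L2 X →L[ℂ] L2 X) (R : ℝ) : Prop :=
  ∀ x y : X, R < dist x y → matrixEntry T x y = 0

/-- The uniform Roe algebra C*_u(X): the operator-norm closure of the set of
finite propagation operators. -/
def UniformRoeAlgebra (X : Type*) [MetricSpace X] : Set (L2 X →L[ℂ] L2 X) :=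
  closure {T | ∃ R : ℝ, 0 ≤ R ∧ HasPropagationLE T R}

/-- `T` is a ghost: its matrix entries tend to 0 at infinity, i.e. for every `ε > 0`
all entries with at least one index outside some finite set have modulus `< ε`. -/
def IsGhost {X : Type*} [MetricSpace X] (T : L2 X →L[ℂ] L2 X) : Prop :=
  ∀ ε : ℝ, 0 < ε → ∃ F : Finset X, ∀ x y : X, (x ∉ F ∨ y ∉ F) → ‖matrixEntry T x y‖ < ε

/-- `Δ` is the Laplacian at scale `R` on ℓ²(X): for every `x`, if `s` is the (finite)
set of points at distance at most `R` from `x`, then `Δ δ_x = Σ_{y ∈ s} (δ_x - δ_y)`. -/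
def IsLaplacianAtScale {X : Type*} [MetricSpace X] (R : ℝ) (Δ : L2 X →L[ℂ] L2 X) : Prop :=
  ∀ (x : X) (s : Finset X), (∀ y : X, y ∈ s ↔ dist x y ≤ R) →
    Δ (diracDelta x) = ∑ y ∈ s, (diracDelta x - diracDelta y)

set_option maxHeartbeats 1000000 in
/-- If `M` bounds the cardinality of all balls of radius `R` in `X`, then for every
norm-one `ξ ∈ ℓ²(X)`,
`Σ_{(x,y) : d(x,y) ≤ R} | |ξ(x)|² - |ξ(y)|² | ≤ √(2 ⟨Δ_R ξ, ξ⟩) · √(4M)`. -/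
theorem laplacian_cauchy_schwarz_bound (X : Type*) [MetricSpace X]
    (hbg : BoundedGeometry X) (R : ℝ) (hR : 0 < R) (M : ℕ)
    (hM : ∀ x : X, (Metric.closedBall x R).Finite ∧ (Metric.closedBall x R).ncard ≤ M)
    (Δ : L2 X →L[ℂ] L2 X) (hΔ : IsLaplacianAtScale R Δ)
    (ξ : L2 X) (hξ : ‖ξ‖ = 1) :
    ∑' p : {q : X × X // dist q.1 q.2 ≤ R}, |‖ξ p.1.1‖ ^ 2 - ‖ξ p.1.2‖ ^ 2| ≤
      Real.sqrt (2 * (inner ℂ (Δ ξ) ξ : ℂ).re) * Real.sqrt (4 * (M : ℝ)) := by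
  classical
  -- Dirac deltas, concretely
  set d : X → L2 X := fun x => lp.single 2 x 1 with hd_def
  have hdd : ∀ x : X, diracDelta x = d x := by
    intro x
    simp only [diracDelta, hd_def]
  -- the ball finsets
  set s : X → Finset X := fun x => (hM x).1.toFinset with hs_def
  have hmem : ∀ x y : X, y ∈ s x ↔ dist x y ≤ R := by
    intro x y
    simp [hs_def, Metric.mem_closedBall, dist_comm]
  have hcard : ∀ x : X, ((s x).card : ℝ) ≤ M := by
    intro x
    have h2 := (hM x).2
    rw [Set.ncard_eq_toFinset_card _ (hM x).1] at h2
    exact_mod_cast h2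
  -- inner products of deltas
  have hinner_dd : ∀ a b : X, (inner ℂ (d a) (d b) : ℂ) = if a = b then 1 else 0 := by
    intro a b
    rw [hd_def]
    rw [lp.inner_single_left]
    rcases eq_or_ne a b with h | h
    · subst h; rw [lp.single_apply_self]; simp [RCLike.inner_apply]
    · rw [lp.single_apply_ne 2 b _ h]; simp [RCLike.inner_apply, h]
  -- matrix entries of the Laplacian
  have Hrow : ∀ x z : X, (inner ℂ (Δ (d x)) (d z) : ℂ)
      = (if x = z then ((s x).card : ℂ) else 0) - (if z ∈ s x then 1 else 0) := by
    intro x z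
    have h1 : Δ (d x) = ∑ y ∈ s x, (d x - d y) := by
      have h := hΔ x (s x) (fun y => hmem x y)
      simpa only [hdd] using h
    rw [h1, sum_inner]
    simp only [inner_sub_left, hinner_dd]
    rw [Finset.sum_sub_distrib]
    congr 1
    · rw [Finset.sum_const]
      rcases eq_or_ne x z with h | h <;> simp [h]
    · simp [Finset.sum_ite_eq']
  -- the finite approximations to ξ
  set P : Finset X → L2 X := fun F => ∑ x ∈ F, lp.single 2 x (ξ x) with hP_def
  have hP : ∀ F : Finset X, P F = ∑ x ∈ F, (ξ x : ℂ) • d x := by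
    intro F
    refine Finset.sum_congr rfl fun x _ => ?_
    rw [hd_def]
    rw [show (ξ x : ℂ) = (ξ x : ℂ) • (1 : ℂ) by simp, lp.single_smul]
    simp
  have Hexpand : ∀ F : Finset X, (inner ℂ (Δ (P F)) (P F) : ℂ)
      = ∑ x ∈ F, ∑ z ∈ F,
          (starRingEnd ℂ) (ξ x) * ξ z * (inner ℂ (Δ (d x)) (d z) : ℂ) := by
    intro F
    rw [hP, map_sum, sum_inner]
    refine Finset.sum_congr rfl fun x _ => ?_
    rw [map_smul, inner_smul_left, inner_sum, Finset.mul_sum]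
    refine Finset.sum_congr rfl fun z _ => ?_
    rw [inner_smul_right]
    ring
  -- real part of the quadratic form
  have Hre : ∀ F : Finset X, (inner ℂ (Δ (P F)) (P F) : ℂ).re
      = (∑ x ∈ F, ((s x).card : ℝ) * ‖ξ x‖ ^ 2)
        - ∑ x ∈ F, ∑ z ∈ F,
            (if z ∈ s x then ((starRingEnd ℂ) (ξ x) * ξ z).re else 0) := by
    intro F
    rw [Hexpand F]
    have inner_eq : ∀ x ∈ F, ∑ z ∈ F,
          (starRingEnd ℂ) (ξ x) * ξ z * (inner ℂ (Δ (d x)) (d z) : ℂ)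
        = ((s x).card : ℂ) * ((starRingEnd ℂ) (ξ x) * ξ x)
          - ∑ z ∈ F, (if z ∈ s x then (starRingEnd ℂ) (ξ x) * ξ z else 0) := by
      intro x hx
      have hterm : ∀ z ∈ F, (starRingEnd ℂ) (ξ x) * ξ z * (inner ℂ (Δ (d x)) (d z) : ℂ)
          = (if x = z then ((s x).card : ℂ) * ((starRingEnd ℂ) (ξ x) * ξ z) else 0)
            - (if z ∈ s x then (starRingEnd ℂ) (ξ x) * ξ z else 0) := by
        intro z _
        rw [Hrow]
        split_ifs <;> ring
      rw [Finset.sum_congr rfl hterm, Finset.sum_sub_distrib]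
      congr 1
      rw [Finset.sum_ite_eq]
      simp [hx]
    rw [Finset.sum_congr rfl inner_eq, Finset.sum_sub_distrib, Complex.sub_re, Complex.re_sum, Complex.re_sum]
    congr 1
    · refine Finset.sum_congr rfl fun x _ => ?_
      rw [← Complex.normSq_eq_conj_mul_self]
      rw [show ((s x).card : ℂ) * ((Complex.normSq (ξ x) : ℝ) : ℂ)
            = (((s x).card * Complex.normSq (ξ x) : ℝ) : ℂ) by push_cast; ring]
      rw [Complex.ofReal_re, Complex.normSq_eq_norm_sq]
    · refine Finset.sum_congr rfl fun x _ => ?_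
      rw [Complex.re_sum]
      refine Finset.sum_congr rfl fun z _ => ?_
      split_ifs <;> simp
  -- the key pointwise identity for norms
  have hpt : ∀ a c : ℂ, ‖a - c‖ ^ 2
      = ‖a‖ ^ 2 + ‖c‖ ^ 2 - 2 * ((starRingEnd ℂ) a * c).re := by
    intro a c
    have h2 : (a * (starRingEnd ℂ) c).re = ((starRingEnd ℂ) a * c).re := by
      have h : a * (starRingEnd ℂ) c = (starRingEnd ℂ) ((starRingEnd ℂ) a * c) := by
        rw [map_mul, Complex.conj_conj]
      rw [h, Complex.conj_re]
    have h3 := Complex.normSq_sub a c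
    simp only [Complex.normSq_eq_norm_sq] at h3
    rw [h3, h2]
  -- the quadratic form dominates the double sum over pairs at distance ≤ R
  have Hform : ∀ F : Finset X,
      (∑ x ∈ F, ∑ z ∈ F, if z ∈ s x then ‖ξ x - ξ z‖ ^ 2 else 0)
        ≤ 2 * (inner ℂ (Δ (P F)) (P F) : ℂ).re := by
    intro F
    rw [Hre]
    have hsplit : (∑ x ∈ F, ∑ z ∈ F, if z ∈ s x then ‖ξ x - ξ z‖ ^ 2 else 0)
        = (∑ x ∈ F, ∑ z ∈ F, if z ∈ s x then ‖ξ x‖ ^ 2 else 0)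
          + (∑ x ∈ F, ∑ z ∈ F, if z ∈ s x then ‖ξ z‖ ^ 2 else 0)
          - 2 * (∑ x ∈ F, ∑ z ∈ F,
              if z ∈ s x then ((starRingEnd ℂ) (ξ x) * ξ z).re else 0) := by
      rw [Finset.mul_sum, ← Finset.sum_add_distrib, ← Finset.sum_sub_distrib]
      refine Finset.sum_congr rfl fun x _ => ?_
      rw [Finset.mul_sum, ← Finset.sum_add_distrib, ← Finset.sum_sub_distrib]
      refine Finset.sum_congr rfl fun z _ => ?_
      split_ifs with h
      · rw [hpt]
      · ring
    have hswap : (∑ x ∈ F, ∑ z ∈ F, if z ∈ s x then ‖ξ z‖ ^ 2 else 0)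
        = (∑ x ∈ F, ∑ z ∈ F, if z ∈ s x then ‖ξ x‖ ^ 2 else 0) := by
      rw [Finset.sum_comm]
      refine Finset.sum_congr rfl fun x _ => Finset.sum_congr rfl fun z _ => ?_
      refine if_congr ?_ rfl rfl
      rw [hmem, hmem, dist_comm]
    have hAle : (∑ x ∈ F, ∑ z ∈ F, if z ∈ s x then ‖ξ x‖ ^ 2 else 0)
        ≤ ∑ x ∈ F, ((s x).card : ℝ) * ‖ξ x‖ ^ 2 := by
      refine Finset.sum_le_sum fun x _ => ?_
      calc ∑ z ∈ F, (if z ∈ s x then ‖ξ x‖ ^ 2 else 0)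
          = ((F ∩ s x).card : ℝ) * ‖ξ x‖ ^ 2 := by
            rw [Finset.sum_ite_mem, Finset.sum_const, nsmul_eq_mul]
        _ ≤ ((s x).card : ℝ) * ‖ξ x‖ ^ 2 := by
            have hc : (F ∩ s x).card ≤ (s x).card :=
              Finset.card_le_card Finset.inter_subset_right
            exact mul_le_mul_of_nonneg_right (by exact_mod_cast hc) (by positivity)
    rw [hsplit, hswap]
    linarith
  -- passage to the limit
  have hcont : Continuous (fun η : L2 X => 2 * (inner ℂ (Δ η) η : ℂ).re) := by
    apply Continuous.mul continuous_const
    exact Complex.continuous_re.comp (continuous_inner.comp ((Δ.continuous).prodMk continuous_id))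
  have hsum : HasSum (fun x : X => lp.single 2 x (ξ x : ℂ)) ξ :=
    lp.hasSum_single (by norm_num) ξ
  have key : ∀ F : Finset X,
      (∑ x ∈ F, ∑ z ∈ F, if z ∈ s x then ‖ξ x - ξ z‖ ^ 2 else 0)
        ≤ 2 * (inner ℂ (Δ ξ) ξ : ℂ).re := by
    intro F
    have tends : Filter.Tendsto (fun G : Finset X => 2 * (inner ℂ (Δ (P G)) (P G) : ℂ).re)
        Filter.atTop (nhds (2 * (inner ℂ (Δ ξ) ξ : ℂ).re)) :=
      (hcont.tendsto ξ).comp hsum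
    refine ge_of_tendsto tends ?_
    filter_upwards [Filter.eventually_ge_atTop F] with G hFG
    refine le_trans ?_ (Hform G)
    calc (∑ x ∈ F, ∑ z ∈ F, if z ∈ s x then ‖ξ x - ξ z‖ ^ 2 else 0)
        ≤ ∑ x ∈ F, ∑ z ∈ G, (if z ∈ s x then ‖ξ x - ξ z‖ ^ 2 else 0) :=
          Finset.sum_le_sum fun x _ =>
            Finset.sum_le_sum_of_subset_of_nonneg hFG
              (fun _ _ _ => by split_ifs <;> positivity)
      _ ≤ ∑ x ∈ G, ∑ z ∈ G, (if z ∈ s x then ‖ξ x - ξ z‖ ^ 2 else 0) :=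
          Finset.sum_le_sum_of_subset_of_nonneg hFG
            (fun _ _ _ => Finset.sum_nonneg fun _ _ => by split_ifs <;> positivity)
  have h2re : 0 ≤ 2 * (inner ℂ (Δ ξ) ξ : ℂ).re := by simpa using key ∅
  -- ℓ² norm bound on finite sums of coordinates
  have hnormsum : ∀ F1 : Finset X, (∑ x ∈ F1, ‖ξ x‖ ^ 2) ≤ 1 := by
    intro F1
    have h := lp.sum_rpow_le_norm_rpow (by norm_num : 0 < (2 : ENNReal).toReal) ξ F1
    simp only [ENNReal.toReal_ofNat, Real.rpow_two, hξ, one_pow] at h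
    exact h
  -- sums of |ξ|² over finite sets of admissible pairs, first coordinate
  have Hcoord : ∀ G' : Finset (X × X), (∀ q ∈ G', dist q.1 q.2 ≤ R) →
      (∑ q ∈ G', ‖ξ q.1‖ ^ 2) ≤ (M : ℝ) := by
    intro G' hG'
    set F1 : Finset X := G'.image Prod.fst with hF1
    have hsub : G' ⊆ F1.biUnion (fun x => (s x).image (fun z => (x, z))) := by
      intro q hq
      rcases q with ⟨a, b⟩
      simp only [Finset.mem_biUnion, Finset.mem_image]
      exact ⟨a, Finset.mem_image.2 ⟨(a, b), hq, rfl⟩, b, (hmem a b).2 (hG' _ hq), rfl⟩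
    have hdisj : (↑F1 : Set X).PairwiseDisjoint
        (fun x => (s x).image (fun z => (x, z))) := by
      intro a _ b _ hab
      simp only [Finset.disjoint_left, Finset.mem_image]
      rintro q ⟨z, _, rfl⟩ ⟨w, _, hw⟩
      exact hab (congrArg Prod.fst hw).symm
    calc (∑ q ∈ G', ‖ξ q.1‖ ^ 2)
        ≤ ∑ q ∈ F1.biUnion (fun x => (s x).image (fun z => (x, z))), ‖ξ q.1‖ ^ 2 :=
          Finset.sum_le_sum_of_subset_of_nonneg hsub (fun _ _ _ => by positivity)
      _ = ∑ x ∈ F1, ∑ q ∈ (s x).image (fun z => (x, z)), ‖ξ q.1‖ ^ 2 :=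
          Finset.sum_biUnion hdisj
      _ = ∑ x ∈ F1, ((s x).card : ℝ) * ‖ξ x‖ ^ 2 := by
          refine Finset.sum_congr rfl fun x _ => ?_
          rw [Finset.sum_image (fun y _ z _ h => (Prod.mk.injEq _ _ _ _).mp h |>.2)]
          simp [Finset.sum_const, nsmul_eq_mul]
      _ ≤ ∑ x ∈ F1, (M : ℝ) * ‖ξ x‖ ^ 2 :=
          Finset.sum_le_sum fun x _ =>
            mul_le_mul_of_nonneg_right (hcard x) (by positivity)
      _ = (M : ℝ) * ∑ x ∈ F1, ‖ξ x‖ ^ 2 := by rw [Finset.mul_sum]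
      _ ≤ (M : ℝ) * 1 := mul_le_mul_of_nonneg_left (hnormsum F1) (by positivity)
      _ = (M : ℝ) := mul_one _
  -- main estimate over an arbitrary finite set of pairs
  refine tsum_le_of_sum_le' (mul_nonneg (Real.sqrt_nonneg _) (Real.sqrt_nonneg _)) ?_
  intro G
  set u : {q : X × X // dist q.1 q.2 ≤ R} → ℝ := fun p => ‖ξ p.1.1 - ξ p.1.2‖ with hu_def
  set v : {q : X × X // dist q.1 q.2 ≤ R} → ℝ := fun p => ‖ξ p.1.1‖ + ‖ξ p.1.2‖ with hv_def
  have hterm : ∀ p : {q : X × X // dist q.1 q.2 ≤ R},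
      |‖ξ p.1.1‖ ^ 2 - ‖ξ p.1.2‖ ^ 2| ≤ u p * v p := by
    intro p
    have h1 : |‖ξ p.1.1‖ - ‖ξ p.1.2‖| ≤ u p := abs_norm_sub_norm_le _ _
    have hvnn : (0 : ℝ) ≤ v p := by
      simp only [hv_def]; positivity
    calc |‖ξ p.1.1‖ ^ 2 - ‖ξ p.1.2‖ ^ 2|
        = |‖ξ p.1.1‖ - ‖ξ p.1.2‖| * v p := by
          simp only [hv_def]
          rw [show ‖ξ p.1.1‖ ^ 2 - ‖ξ p.1.2‖ ^ 2
              = (‖ξ p.1.1‖ - ‖ξ p.1.2‖) * (‖ξ p.1.1‖ + ‖ξ p.1.2‖) by ring,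
            abs_mul, abs_of_nonneg (by positivity : (0:ℝ) ≤ ‖ξ p.1.1‖ + ‖ξ p.1.2‖)]
      _ ≤ u p * v p := mul_le_mul_of_nonneg_right h1 hvnn
  have himg_val : ∀ f : X × X → ℝ,
      (∑ p ∈ G, f p.1) = ∑ q ∈ G.image Subtype.val, f q := by
    intro f
    rw [Finset.sum_image (fun a _ b _ h => Subtype.ext h)]
  have hvalmem : ∀ q ∈ G.image Subtype.val, dist q.1 q.2 ≤ R := by
    intro q hq
    obtain ⟨p, _, rfl⟩ := Finset.mem_image.mp hq
    exact p.2
  -- bound on Σ u²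
  have hu2 : (∑ p ∈ G, u p ^ 2) ≤ 2 * (inner ℂ (Δ ξ) ξ : ℂ).re := by
    set F : Finset X := G.image (fun p => p.1.1) ∪ G.image (fun p => p.1.2) with hF
    refine le_trans ?_ (key F)
    have h1 : (∑ p ∈ G, u p ^ 2) = ∑ q ∈ G.image Subtype.val, ‖ξ q.1 - ξ q.2‖ ^ 2 :=
      himg_val (fun q => ‖ξ q.1 - ξ q.2‖ ^ 2)
    have h2 : (∑ x ∈ F, ∑ z ∈ F, if z ∈ s x then ‖ξ x - ξ z‖ ^ 2 else 0)
        = ∑ q ∈ (F ×ˢ F).filter (fun q => q.2 ∈ s q.1), ‖ξ q.1 - ξ q.2‖ ^ 2 := by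
      rw [Finset.sum_filter, Finset.sum_product]
    rw [h1, h2]
    refine Finset.sum_le_sum_of_subset_of_nonneg ?_ (fun _ _ _ => by positivity)
    intro q hq
    obtain ⟨p, hp, rfl⟩ := Finset.mem_image.mp hq
    simp only [Finset.mem_filter, Finset.mem_product, hF, Finset.mem_union, Finset.mem_image]
    exact ⟨⟨Or.inl ⟨p, hp, rfl⟩, Or.inr ⟨p, hp, rfl⟩⟩, (hmem _ _).2 p.2⟩
  -- bound on Σ v²
  have hv2 : (∑ p ∈ G, v p ^ 2) ≤ 4 * (M : ℝ) := by
    have hc1 : (∑ p ∈ G, ‖ξ p.1.1‖ ^ 2) ≤ (M : ℝ) := by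
      rw [himg_val (fun q => ‖ξ q.1‖ ^ 2)]
      exact Hcoord _ hvalmem
    have hc2 : (∑ p ∈ G, ‖ξ p.1.2‖ ^ 2) ≤ (M : ℝ) := by
      rw [himg_val (fun q => ‖ξ q.2‖ ^ 2)]
      set G' : Finset (X × X) := G.image Subtype.val with hG'
      have hswap : (∑ q ∈ G', ‖ξ q.2‖ ^ 2) = ∑ q ∈ G'.image Prod.swap, ‖ξ q.1‖ ^ 2 := by
        rw [Finset.sum_image (fun a _ b _ h => Prod.swap_injective h)]
        simp
      rw [hswap]
      refine Hcoord _ ?_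
      intro q hq
      obtain ⟨w, hw, rfl⟩ := Finset.mem_image.mp hq
      have := hvalmem w hw
      simpa [dist_comm] using this
    have hsq : ∀ p ∈ G, v p ^ 2 ≤ 2 * ‖ξ p.1.1‖ ^ 2 + 2 * ‖ξ p.1.2‖ ^ 2 := by
      intro p _
      simp only [hv_def]
      nlinarith [sq_nonneg (‖ξ p.1.1‖ - ‖ξ p.1.2‖)]
    calc (∑ p ∈ G, v p ^ 2)
        ≤ ∑ p ∈ G, (2 * ‖ξ p.1.1‖ ^ 2 + 2 * ‖ξ p.1.2‖ ^ 2) := Finset.sum_le_sum hsq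
      _ = 2 * (∑ p ∈ G, ‖ξ p.1.1‖ ^ 2) + 2 * (∑ p ∈ G, ‖ξ p.1.2‖ ^ 2) := by
          rw [Finset.sum_add_distrib, Finset.mul_sum, Finset.mul_sum]
      _ ≤ 2 * (M : ℝ) + 2 * (M : ℝ) := by
          have h1 := mul_le_mul_of_nonneg_left hc1 (by norm_num : (0:ℝ) ≤ 2)
          have h2 := mul_le_mul_of_nonneg_left hc2 (by norm_num : (0:ℝ) ≤ 2)
          linarith
      _ = 4 * (M : ℝ) := by ring
  -- Cauchy–Schwarz and conclusion
  have hCS := Finset.sum_mul_sq_le_sq_mul_sq G u v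
  have huv : (0 : ℝ) ≤ ∑ p ∈ G, u p * v p :=
    Finset.sum_nonneg fun p _ => mul_nonneg (norm_nonneg _) (by simp only [hv_def]; positivity)
  have hv2nn : (0 : ℝ) ≤ ∑ p ∈ G, v p ^ 2 :=
    Finset.sum_nonneg fun p _ => sq_nonneg _
  have hfinal : (∑ p ∈ G, u p * v p)
      ≤ Real.sqrt (2 * (inner ℂ (Δ ξ) ξ : ℂ).re) * Real.sqrt (4 * (M : ℝ)) := by
    rw [← Real.sqrt_mul h2re, ← Real.sqrt_sq huv]
    apply Real.sqrt_le_sqrt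
    calc (∑ p ∈ G, u p * v p) ^ 2
        ≤ (∑ p ∈ G, u p ^ 2) * (∑ p ∈ G, v p ^ 2) := hCS
      _ ≤ (2 * (inner ℂ (Δ ξ) ξ : ℂ).re) * (4 * (M : ℝ)) :=
          mul_le_mul hu2 hv2 hv2nn h2re
  calc (∑ p ∈ G, |‖ξ p.1.1‖ ^ 2 - ‖ξ p.1.2‖ ^ 2|)
      ≤ ∑ p ∈ G, u p * v p := Finset.sum_le_sum fun p _ => hterm p
    _ ≤ Real.sqrt (2 * (inner ℂ (Δ ξ) ξ : ℂ).re) * Real.sqrt (4 * (M : ℝ)) := hfinal
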